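/- Let (a_i,b_i)_{i=1}^s be a composition of positive integers with a_1 ≥ 2 and b_1 ≥ 2, let λ ∈ ℂ not be a positive integer, and set λ' = λ−1. If s ≥ 2 or b_1 ≥ 2 (as assumed), then λ·[{(a_1,0),b_1,(a_2,0),b_2,…};λ] − [{(a_1−1,0),b_1,(a_2,0),b_2,…};λ] − [{(a_1,0),b_1−1,(a_2,0),b_2,…};λ] = λ'·[{(a_1,1),b_1,(a_2,0),b_2,…};λ] − [{(a_1−1,1),b_1,(a_2,0),b_2,…};λ], where in each bracket only the displayed first block is modified and all later blocks (a_i,0),b_i for i = 2,…,s are unchanged, and all brackets are evaluated at the indicated argument (λ on both sides except for the prefactor λ'). -/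

import Mathlib

/-- Strictly decreasing tuples `m 0 > m 1 > ⋯ > m (N-1) ≥ 1` of positive integers,
padded by `0` from position `N` on. -/
def DecTuple (N : ℕ) : Set (ℕ → ℕ) :=
  {m | (∀ j, j + 1 < N → m (j + 1) < m j) ∧ (∀ j, j < N → 1 ≤ m j) ∧ ∀ j, N ≤ j → m j = 0}

/-- The bracket `[{(a₁,d₁),b₁,…,(a_s,d_s),b_s};λ] =
Σ_{m₁>⋯>m_{B_s}≥1} Πᵢ (m_{B_{i-1}+1} - dᵢ)^{-aᵢ} Π_{j=B_{i-1}+1}^{B_i} (m_j-λ)⁻¹`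
(0-based indices). -/
noncomputable def bracket (s : ℕ) (a b d : ℕ → ℕ) (lam : ℂ) : ℂ :=
  ∑' m : DecTuple (∑ t ∈ Finset.range s, b t),
    ∏ i ∈ Finset.range s,
      (((m.1 (∑ t ∈ Finset.range i, b t) : ℂ) - (d i : ℕ)) ^ a i)⁻¹ *
        ∏ j ∈ Finset.Ico (∑ t ∈ Finset.range i, b t) (∑ t ∈ Finset.range (i + 1), b t),
          ((m.1 j : ℂ) - lam)⁻¹

namespace BFB
open Finset

def cons (k : ℕ) (n : ℕ → ℕ) : ℕ → ℕ := fun j => match j with | 0 => k | j + 1 => n j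

lemma tail_mem {N : ℕ} (m : DecTuple (N + 1)) : (fun j => m.1 (j + 1)) ∈ DecTuple N :=
  ⟨fun j hj => m.2.1 (j + 1) (by omega), fun j hj => m.2.2.1 (j + 1) (by omega),
    fun j hj => m.2.2.2 (j + 1) (by omega)⟩

lemma head_lt {N : ℕ} (m : DecTuple (N + 1)) : m.1 1 < m.1 0 := by
  rcases N with _ | N
  · have h0 : 1 ≤ m.1 0 := m.2.2.1 0 (by omega)
    have h1 : m.1 1 = 0 := m.2.2.2 1 (by omega)
    omega
  · exact m.2.1 0 (by omega)

def decEquiv (N : ℕ) : DecTuple (N + 1) ≃ Σ n : DecTuple N, {k : ℕ // n.1 0 < k} where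
  toFun m := ⟨⟨fun j => m.1 (j + 1), tail_mem m⟩, ⟨m.1 0, head_lt m⟩⟩
  invFun p := ⟨cons p.2.1 p.1.1, by
    obtain ⟨⟨n, hn⟩, ⟨k, hk⟩⟩ := p
    have hk' : n 0 < k := hk
    refine ⟨fun j hj => ?_, fun j hj => ?_, fun j hj => ?_⟩
    · match j with
      | 0 => exact hk'
      | j + 1 => exact hn.1 j (by omega)
    · match j with
      | 0 => exact Nat.lt_of_le_of_lt (Nat.zero_le _) hk'
      | j + 1 => exact hn.2.1 j (by omega)
    · match j with
      | j + 1 => exact hn.2.2 j (by omega)⟩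
  left_inv m := Subtype.ext (funext fun j => by cases j <;> rfl)
  right_inv p := rfl

noncomputable def wt (N : ℕ) (m : ℕ → ℕ) : ℝ :=
  ((m 0 : ℝ) ^ 2)⁻¹ * ∏ j ∈ Finset.Ico 1 N, ((m j : ℝ))⁻¹

lemma prod_Ico_one {M : Type*} [CommMonoid M] (f : ℕ → M) (N : ℕ) :
    ∏ j ∈ Finset.Ico 1 (N + 1), f j = ∏ j ∈ Finset.range N, f (j + 1) := by
  rw [Finset.prod_Ico_eq_prod_range]
  simp [add_comm]

def shiftEquiv (c : ℕ) : ℕ ≃ {k : ℕ // c < k} where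
  toFun i := ⟨c + 1 + i, by omega⟩
  invFun k := (k : ℕ) - (c + 1)
  left_inv i := by simp
  right_inv k := by
    have := k.2
    exact Subtype.ext (by simp; omega)

@[simp] lemma shiftEquiv_coe (c i : ℕ) : ((shiftEquiv c i : ℕ)) = c + 1 + i := rfl

lemma summable_inv_sq_subtype (c : ℕ) :
    Summable (fun k : {k : ℕ // c < k} => (((k : ℕ) : ℝ) ^ 2)⁻¹) := by
  have h : Summable (fun k : ℕ => ((k : ℝ) ^ 2)⁻¹) := by
    have := (Real.summable_one_div_nat_pow (p := 2)).2 (by omega)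
    simpa [one_div] using this
  exact h.subtype _

lemma tsum_inv_sq_le (c : ℕ) (hc : 1 ≤ c) :
    (∑' k : {k : ℕ // c < k}, (((k : ℕ) : ℝ) ^ 2)⁻¹) ≤ (c : ℝ)⁻¹ := by
  have hrw : (∑' k : {k : ℕ // c < k}, (((k : ℕ) : ℝ) ^ 2)⁻¹)
      = ∑' i : ℕ, (((c + 1 + i : ℕ) : ℝ) ^ 2)⁻¹ := by
    rw [← (shiftEquiv c).tsum_eq (fun k : {k : ℕ // c < k} => (((k : ℕ) : ℝ) ^ 2)⁻¹)]
    simp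
  rw [hrw]
  have hg : HasSum (fun i : ℕ => ((c : ℝ) + i)⁻¹ - ((c : ℝ) + (i + 1))⁻¹) ((c : ℝ))⁻¹ := by
    have hnn : ∀ i : ℕ, 0 ≤ ((c : ℝ) + i)⁻¹ - ((c : ℝ) + (i + 1))⁻¹ := by
      intro i
      have h1 : (0 : ℝ) < (c : ℝ) + i := by positivity
      have : ((c : ℝ) + (i + 1))⁻¹ ≤ ((c : ℝ) + i)⁻¹ := by
        apply inv_anti₀ h1; linarith
      linarith
    rw [hasSum_iff_tendsto_nat_of_nonneg hnn]
    have hsum : ∀ n : ℕ, (∑ i ∈ Finset.range n, (((c : ℝ) + i)⁻¹ - ((c : ℝ) + (i + 1))⁻¹))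
        = ((c : ℝ))⁻¹ - ((c : ℝ) + n)⁻¹ := by
      intro n
      have := Finset.sum_range_sub' (f := fun i : ℕ => ((c : ℝ) + i)⁻¹) n
      simpa using this
    simp only [hsum]
    have h0 : Filter.Tendsto (fun n : ℕ => ((c : ℝ) + n)⁻¹) Filter.atTop (nhds 0) := by
      apply Filter.Tendsto.comp tendsto_inv_atTop_zero
      apply Filter.tendsto_atTop_add_const_left
      exact tendsto_natCast_atTop_atTop
    have := Filter.Tendsto.sub (tendsto_const_nhds (x := ((c : ℝ))⁻¹)) h0
    simpa using this
  have hle : ∀ i : ℕ, (((c + 1 + i : ℕ) : ℝ) ^ 2)⁻¹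
      ≤ ((c : ℝ) + i)⁻¹ - ((c : ℝ) + (i + 1))⁻¹ := by
    intro i
    have h1 : ((c : ℝ) + i) ≠ 0 := by positivity
    have h2 : ((c : ℝ) + i + 1) ≠ 0 := by positivity
    have heq : ((c : ℝ) + i)⁻¹ - ((c : ℝ) + (i + 1))⁻¹
        = (((c : ℝ) + i) * ((c : ℝ) + i + 1))⁻¹ := by
      rw [mul_inv]
      rw [show ((c : ℝ) + (↑i + 1)) = (c : ℝ) + i + 1 by ring]
      field_simp
      ring
    rw [heq]
    apply inv_anti₀ (by positivity)
    push_cast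
    nlinarith
  have hs1 : Summable (fun i : ℕ => (((c + 1 + i : ℕ) : ℝ) ^ 2)⁻¹) := by
    have := ((shiftEquiv c).summable_iff
      (f := fun k : {k : ℕ // c < k} => (((k : ℕ) : ℝ) ^ 2)⁻¹)).2 (summable_inv_sq_subtype c)
    simpa [Function.comp_def] using this
  calc (∑' i : ℕ, (((c + 1 + i : ℕ) : ℝ) ^ 2)⁻¹)
      ≤ ∑' i : ℕ, (((c : ℝ) + i)⁻¹ - ((c : ℝ) + (i + 1))⁻¹) :=
        Summable.tsum_le_tsum hle hs1 hg.summable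
    _ = ((c : ℝ))⁻¹ := hg.tsum_eq


lemma sumW : ∀ N : ℕ, Summable (fun m : DecTuple (N + 1) => wt (N + 1) m.1) := by
  intro N
  induction N with
  | zero =>
    have hg : Summable (fun k : ℕ => ((k : ℝ) ^ 2)⁻¹) := by
      have := (Real.summable_one_div_nat_pow (p := 2)).2 (by omega)
      simpa [one_div] using this
    have hinj : Function.Injective (fun m : DecTuple 1 => m.1 0) := by
      intro m m' h
      apply Subtype.ext; funext j
      match j with
      | 0 => exact h
      | j + 1 => rw [m.2.2.2 (j + 1) (by omega), m'.2.2.2 (j + 1) (by omega)]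
    have := hg.comp_injective hinj
    apply Summable.congr this
    intro m
    simp [wt, Function.comp]
  | succ N ih =>
    set F : (Σ n : DecTuple (N + 1), {k : ℕ // n.1 0 < k}) → ℝ :=
      fun p => (((p.2.1 : ℕ) : ℝ) ^ 2)⁻¹ * ∏ j ∈ Finset.range (N + 1), ((p.1.1 j : ℝ))⁻¹ with hF
    have hnn : ∀ p, 0 ≤ F p := by
      intro p
      apply mul_nonneg (by positivity)
      exact Finset.prod_nonneg fun j _ => by positivity
    have hfib : ∀ n : DecTuple (N + 1),
        Summable (fun k : {k : ℕ // n.1 0 < k} => F ⟨n, k⟩) := fun n => by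
      have h := (summable_inv_sq_subtype (n.1 0)).mul_right
        (∏ j ∈ Finset.range (N + 1), ((n.1 j : ℝ))⁻¹)
      exact h
    have hSF : Summable F := by
      rw [summable_sigma_of_nonneg hnn]
      refine ⟨hfib, ?_⟩
      apply Summable.of_nonneg_of_le (fun n => tsum_nonneg fun k => hnn _)
        (fun n => ?_) ih
      have h0 : (∑' k : {k : ℕ // n.1 0 < k}, F ⟨n, k⟩)
          = ∑' k : {k : ℕ // n.1 0 < k},
              (((k : ℕ) : ℝ) ^ 2)⁻¹ * ∏ j ∈ Finset.range (N + 1), ((n.1 j : ℝ))⁻¹ :=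
        tsum_congr fun k => rfl
      rw [h0, tsum_mul_right]
      have hn0 : 1 ≤ n.1 0 := n.2.2.1 0 (by omega)
      have h2 : (∏ j ∈ Finset.range (N + 1), ((n.1 j : ℝ))⁻¹)
          = ((n.1 0 : ℝ))⁻¹ * ∏ j ∈ Finset.Ico 1 (N + 1), ((n.1 j : ℝ))⁻¹ := by
        rw [Finset.range_eq_Ico, Finset.prod_eq_prod_Ico_succ_bot (by omega)]
      have hP : 0 ≤ ∏ j ∈ Finset.Ico 1 (N + 1), ((n.1 j : ℝ))⁻¹ :=
        Finset.prod_nonneg fun j _ => by positivity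
      rw [h2, wt, ← mul_assoc]
      have := tsum_inv_sq_le (n.1 0) hn0
      have hb : (∑' k : {k : ℕ // n.1 0 < k}, (((k : ℕ) : ℝ) ^ 2)⁻¹) * ((n.1 0 : ℝ))⁻¹
          ≤ ((n.1 0 : ℝ))⁻¹ * ((n.1 0 : ℝ))⁻¹ := by
        apply mul_le_mul_of_nonneg_right this (by positivity)
      calc (∑' k : {k : ℕ // n.1 0 < k}, (((k : ℕ) : ℝ) ^ 2)⁻¹) * ((n.1 0 : ℝ))⁻¹
            * ∏ j ∈ Finset.Ico 1 (N + 1), ((n.1 j : ℝ))⁻¹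
          ≤ (((n.1 0 : ℝ))⁻¹ * ((n.1 0 : ℝ))⁻¹)
            * ∏ j ∈ Finset.Ico 1 (N + 1), ((n.1 j : ℝ))⁻¹ :=
            mul_le_mul_of_nonneg_right hb hP
        _ = ((n.1 0 : ℝ) ^ 2)⁻¹ * ∏ j ∈ Finset.Ico 1 (N + 1), ((n.1 j : ℝ))⁻¹ := by
            rw [← mul_inv, ← sq]
    have hcomp := hSF.comp_injective (decEquiv (N + 1)).injective
    apply Summable.congr hcomp
    intro m
    show F (decEquiv (N + 1) m) = wt (N + 2) m.1
    rw [hF]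
    show (((m.1 0 : ℕ) : ℝ) ^ 2)⁻¹ * ∏ j ∈ Finset.range (N + 1), ((m.1 (j + 1) : ℝ))⁻¹
        = wt (N + 2) m.1
    rw [wt, prod_Ico_one]

lemma masterSummable {N : ℕ} (F : (ℕ → ℕ) → ℂ) (K : ℝ)
    (hF : ∀ m : DecTuple (N + 1), ‖F m.1‖ ≤ K * wt (N + 1) m.1) :
    Summable (fun m : DecTuple (N + 1) => F m.1) :=
  Summable.of_norm_bounded ((sumW N).mul_left K) hF

lemma norm_inv_pow_le (k A : ℕ) (hk : 1 ≤ k) (hA : 2 ≤ A) :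
    ‖(((k : ℕ) : ℂ) ^ A)⁻¹‖ ≤ ((k : ℝ) ^ 2)⁻¹ := by
  rw [norm_inv, norm_pow, Complex.norm_natCast]
  apply inv_anti₀ (by positivity)
  exact pow_le_pow_right₀ (by exact_mod_cast hk) hA

lemma summable_u (c A : ℕ) (hc : 1 ≤ c) (hA : 2 ≤ A) :
    Summable (fun i : ℕ => (((c + i : ℕ) : ℂ) ^ A)⁻¹) := by
  have hg : Summable (fun k : ℕ => ((k : ℝ) ^ 2)⁻¹) := by
    have := (Real.summable_one_div_nat_pow (p := 2)).2 (by omega)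
    simpa [one_div] using this
  have hb : Summable (fun i : ℕ => (((c + i : ℕ) : ℝ) ^ 2)⁻¹) := by
    have := hg.comp_injective (add_right_injective c)
    simpa [Function.comp_def] using this
  apply Summable.of_norm_bounded hb
  intro i
  exact norm_inv_pow_le (c + i) A (by omega) hA

lemma telescopeC (c : ℕ) (hc : 1 ≤ c) (A : ℕ) (hA : 2 ≤ A) :
    (∑' k : {k : ℕ // c < k}, (((((k : ℕ) : ℂ) - 1) ^ A)⁻¹ - (((k : ℕ) : ℂ) ^ A)⁻¹))
      = (((c : ℕ) : ℂ) ^ A)⁻¹ := by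
  have hu : Summable (fun i : ℕ => (((c + i : ℕ) : ℂ) ^ A)⁻¹) := summable_u c A hc hA
  have hu' : Summable (fun i : ℕ => (((c + (i + 1) : ℕ) : ℂ) ^ A)⁻¹) := by
    have h := (summable_nat_add_iff
      (f := fun i : ℕ => (((c + i : ℕ) : ℂ) ^ A)⁻¹) 1).2 hu
    apply h.congr
    intro i
    rfl
  have hrw : (∑' k : {k : ℕ // c < k}, (((((k : ℕ) : ℂ) - 1) ^ A)⁻¹ - (((k : ℕ) : ℂ) ^ A)⁻¹))
      = ∑' i : ℕ, ((((c + i : ℕ) : ℂ) ^ A)⁻¹ - (((c + (i + 1) : ℕ) : ℂ) ^ A)⁻¹) := by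
    rw [← (shiftEquiv c).tsum_eq
      (fun k : {k : ℕ // c < k} => ((((k : ℕ) : ℂ) - 1) ^ A)⁻¹ - (((k : ℕ) : ℂ) ^ A)⁻¹)]
    apply tsum_congr
    intro i
    simp only [shiftEquiv_coe]
    have h1 : (((c + 1 + i : ℕ) : ℂ)) - 1 = ((c + i : ℕ) : ℂ) := by push_cast; ring
    have h2 : ((c + 1 + i : ℕ) : ℂ) = ((c + (i + 1) : ℕ) : ℂ) := by push_cast; ring
    rw [h1, h2]
  rw [hrw, Summable.tsum_sub hu hu', Summable.tsum_eq_zero_add hu, add_sub_cancel_right]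
  norm_num

lemma core (N A : ℕ) (hA : 2 ≤ A) (g : (ℕ → ℕ) → ℂ) (K : ℝ)
    (hg : ∀ n : DecTuple (N + 1), ‖g n.1‖ ≤ K * ∏ j ∈ Finset.range (N + 1), ((n.1 j : ℝ))⁻¹) :
    (∑' m : DecTuple (N + 2),
      ((((m.1 0 : ℂ) - 1) ^ A)⁻¹ - ((m.1 0 : ℂ) ^ A)⁻¹) * g (fun j => m.1 (j + 1)))
      = ∑' n : DecTuple (N + 1), ((n.1 0 : ℂ) ^ A)⁻¹ * g n.1 := by
  set F : (Σ n : DecTuple (N + 1), {k : ℕ // n.1 0 < k}) → ℂ :=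
    fun p => (((((p.2.1 : ℕ) : ℂ) - 1) ^ A)⁻¹ - (((p.2.1 : ℕ) : ℂ) ^ A)⁻¹) * g p.1.1 with hFdef
  -- summability of the left family
  have hS : Summable (fun m : DecTuple (N + 2) =>
      ((((m.1 0 : ℂ) - 1) ^ A)⁻¹ - ((m.1 0 : ℂ) ^ A)⁻¹) * g (fun j => m.1 (j + 1))) := by
    refine masterSummable (N := N + 1)
      (fun x => ((((x 0 : ℂ) - 1) ^ A)⁻¹ - ((x 0 : ℂ) ^ A)⁻¹) * g (fun j => x (j + 1)))
      (5 * K) ?_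
    intro m
    have hm1 : 1 ≤ m.1 1 := m.2.2.1 1 (by omega)
    have hm0 : 2 ≤ m.1 0 := by have := head_lt m; omega
    have htail : (fun j => m.1 (j + 1)) ∈ DecTuple (N + 1) := tail_mem m
    have hgb := hg ⟨_, htail⟩
    have hgb' : ‖g (fun j => m.1 (j + 1))‖ ≤ K * ∏ j ∈ Finset.range (N + 1), ((m.1 (j + 1) : ℝ))⁻¹ := hgb
    have hd : ‖(((m.1 0 : ℂ) - 1) ^ A)⁻¹ - ((m.1 0 : ℂ) ^ A)⁻¹‖ ≤ 5 * ((m.1 0 : ℝ) ^ 2)⁻¹ := by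
      have hcast : ((m.1 0 : ℂ)) - 1 = (((m.1 0 - 1 : ℕ) : ℂ)) := by
        have : (1 : ℕ) ≤ m.1 0 := by omega
        push_cast [this]
        ring
      have h1 : ‖(((m.1 0 : ℂ) - 1) ^ A)⁻¹‖ ≤ (((m.1 0 - 1 : ℕ) : ℝ) ^ 2)⁻¹ := by
        rw [hcast]
        exact norm_inv_pow_le _ A (by omega) hA
      have h2 : ‖((m.1 0 : ℂ) ^ A)⁻¹‖ ≤ ((m.1 0 : ℝ) ^ 2)⁻¹ := norm_inv_pow_le _ A (by omega) hA
      have h3 : (((m.1 0 - 1 : ℕ) : ℝ) ^ 2)⁻¹ ≤ 4 * ((m.1 0 : ℝ) ^ 2)⁻¹ := by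
        have e1 : ((m.1 0 : ℝ)) ≤ 2 * ((m.1 0 - 1 : ℕ) : ℝ) := by
          have : m.1 0 ≤ 2 * (m.1 0 - 1) := by omega
          exact_mod_cast this
        have e2 : (0 : ℝ) < ((m.1 0 - 1 : ℕ) : ℝ) := by
          exact_mod_cast (by omega : 0 < m.1 0 - 1)
        have e3 : (0 : ℝ) < (m.1 0 : ℝ) := by positivity
        rw [show (4 : ℝ) * ((m.1 0 : ℝ) ^ 2)⁻¹ = ((m.1 0 : ℝ) ^ 2 / 4)⁻¹ by
          rw [inv_div]; ring]
        apply inv_anti₀ (by positivity)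
        rw [div_le_iff₀ (by norm_num : (0 : ℝ) < 4)]
        nlinarith
      calc ‖(((m.1 0 : ℂ) - 1) ^ A)⁻¹ - ((m.1 0 : ℂ) ^ A)⁻¹‖
          ≤ ‖(((m.1 0 : ℂ) - 1) ^ A)⁻¹‖ + ‖((m.1 0 : ℂ) ^ A)⁻¹‖ := norm_sub_le _ _
        _ ≤ 4 * ((m.1 0 : ℝ) ^ 2)⁻¹ + ((m.1 0 : ℝ) ^ 2)⁻¹ := by
            have := le_trans h1 h3
            linarith
        _ = 5 * ((m.1 0 : ℝ) ^ 2)⁻¹ := by ring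
    rw [norm_mul]
    have hKP : 0 ≤ K * ∏ j ∈ Finset.range (N + 1), ((m.1 (j + 1) : ℝ))⁻¹ :=
      le_trans (norm_nonneg _) hgb'
    calc ‖(((m.1 0 : ℂ) - 1) ^ A)⁻¹ - ((m.1 0 : ℂ) ^ A)⁻¹‖ * ‖g (fun j => m.1 (j + 1))‖
        ≤ (5 * ((m.1 0 : ℝ) ^ 2)⁻¹) * (K * ∏ j ∈ Finset.range (N + 1), ((m.1 (j + 1) : ℝ))⁻¹) :=
          mul_le_mul hd hgb' (norm_nonneg _) (by positivity)
      _ = (5 * K) * wt (N + 2) m.1 := by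
          rw [wt, prod_Ico_one]
          ring
  have hSF : Summable F := ((decEquiv (N + 1)).summable_iff (f := F)).1 hS
  calc (∑' m : DecTuple (N + 2),
        ((((m.1 0 : ℂ) - 1) ^ A)⁻¹ - ((m.1 0 : ℂ) ^ A)⁻¹) * g (fun j => m.1 (j + 1)))
      = ∑' m : DecTuple (N + 2), F (decEquiv (N + 1) m) := tsum_congr fun m => rfl
    _ = ∑' p, F p := (decEquiv (N + 1)).tsum_eq F
    _ = ∑' n : DecTuple (N + 1), ∑' k : {k : ℕ // n.1 0 < k}, F ⟨n, k⟩ := hSF.tsum_sigma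
    _ = ∑' n : DecTuple (N + 1), ((n.1 0 : ℂ) ^ A)⁻¹ * g n.1 := by
        apply tsum_congr
        intro n
        have h1 : (∑' k : {k : ℕ // n.1 0 < k}, F ⟨n, k⟩)
            = ∑' k : {k : ℕ // n.1 0 < k},
                (((((k : ℕ) : ℂ) - 1) ^ A)⁻¹ - (((k : ℕ) : ℂ) ^ A)⁻¹) * g n.1 :=
          tsum_congr fun k => rfl
        rw [h1, tsum_mul_right, telescopeC (n.1 0) (n.2.2.1 0 (by omega)) A hA]


noncomputable def blockP (a b : ℕ → ℕ) (lam : ℂ) (m : ℕ → ℕ) (i : ℕ) : ℂ :=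
  ((m (∑ t ∈ Finset.range i, b t) : ℂ) ^ a i)⁻¹ *
    ∏ j ∈ Finset.Ico (∑ t ∈ Finset.range i, b t) (∑ t ∈ Finset.range (i + 1), b t),
      ((m j : ℂ) - lam)⁻¹

noncomputable def tailG (s' : ℕ) (a b : ℕ → ℕ) (lam : ℂ) (m : ℕ → ℕ) : ℂ :=
  (∏ j ∈ Finset.Ico 1 (b 0), ((m j : ℂ) - lam)⁻¹) *
    ∏ i ∈ Finset.range s', blockP a b lam m (i + 1)

noncomputable def gfun (s' : ℕ) (a b : ℕ → ℕ) (lam : ℂ) (n : ℕ → ℕ) : ℂ :=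
  tailG s' a b lam (cons 0 n)

lemma term_split (s' : ℕ) (a b : ℕ → ℕ) (lam : ℂ) (m : ℕ → ℕ) (hb0 : 0 < b 0)
    (A' d : ℕ → ℕ) (hA' : ∀ i, 0 < i → A' i = a i) (hd : ∀ i, 0 < i → d i = 0) :
    (∏ i ∈ Finset.range (s' + 1),
      (((m (∑ t ∈ Finset.range i, b t) : ℂ) - (d i : ℕ)) ^ A' i)⁻¹ *
        ∏ j ∈ Finset.Ico (∑ t ∈ Finset.range i, b t) (∑ t ∈ Finset.range (i + 1), b t),
          ((m j : ℂ) - lam)⁻¹)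
    = (((m 0 : ℂ) - (d 0 : ℕ)) ^ A' 0)⁻¹ *
        (((m 0 : ℂ) - lam)⁻¹ * tailG s' a b lam m) := by
  rw [Finset.prod_range_succ']
  have hstep : ∀ i ∈ Finset.range s',
      ((((m (∑ t ∈ Finset.range (i + 1), b t) : ℕ) : ℂ) - ((d (i + 1) : ℕ) : ℂ)) ^ A' (i + 1))⁻¹ *
        ∏ j ∈ Finset.Ico (∑ t ∈ Finset.range (i + 1), b t) (∑ t ∈ Finset.range (i + 1 + 1), b t),
          ((m j : ℂ) - lam)⁻¹
      = blockP a b lam m (i + 1) := by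
    intro i _
    rw [hd (i + 1) (by omega), hA' (i + 1) (by omega)]
    simp [blockP]
  rw [Finset.prod_congr rfl hstep]
  have h0 : (∑ t ∈ Finset.range 0, b t) = 0 := by simp
  have h1 : (∑ t ∈ Finset.range (0 + 1), b t) = b 0 := by simp
  rw [h0, h1, Finset.prod_eq_prod_Ico_succ_bot hb0 (fun j => ((m j : ℂ) - lam)⁻¹)]
  simp only [tailG]
  ring

lemma tailG_congr (s' : ℕ) (a b : ℕ → ℕ) (lam : ℂ) (m m' : ℕ → ℕ) (hb0 : 1 ≤ b 0)
    (h : ∀ j, 1 ≤ j → m j = m' j) :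
    tailG s' a b lam m = tailG s' a b lam m' := by
  have hS : ∀ i : ℕ, 1 ≤ ∑ t ∈ Finset.range (i + 1), b t := by
    intro i
    calc 1 ≤ b 0 := hb0
      _ ≤ ∑ t ∈ Finset.range (i + 1), b t :=
        Finset.single_le_sum (fun t _ => Nat.zero_le _) (Finset.mem_range.2 (by omega))
  simp only [tailG, blockP]
  congr 1
  · exact Finset.prod_congr rfl fun j hj => by rw [h j (Finset.mem_Ico.1 hj).1]
  · apply Finset.prod_congr rfl
    intro i _
    have hhead : m (∑ t ∈ Finset.range (i + 1), b t) = m' (∑ t ∈ Finset.range (i + 1), b t) :=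
      h _ (hS i)
    have hin : (∏ j ∈ Finset.Ico (∑ t ∈ Finset.range (i + 1), b t)
          (∑ t ∈ Finset.range (i + 1 + 1), b t), ((m j : ℂ) - lam)⁻¹)
        = ∏ j ∈ Finset.Ico (∑ t ∈ Finset.range (i + 1), b t)
          (∑ t ∈ Finset.range (i + 1 + 1), b t), ((m' j : ℂ) - lam)⁻¹ :=
      Finset.prod_congr rfl fun j hj =>
        by rw [h j (le_trans (hS i) (Finset.mem_Ico.1 hj).1)]
    rw [hhead, hin]

lemma gfun_tail (s' : ℕ) (a b : ℕ → ℕ) (lam : ℂ) (hb0 : 1 ≤ b 0) (m : ℕ → ℕ) :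
    gfun s' a b lam (fun j => m (j + 1)) = tailG s' a b lam m := by
  apply tailG_congr s' a b lam _ _ hb0
  intro j hj
  obtain ⟨j', rfl⟩ : ∃ j', j = j' + 1 := ⟨j - 1, by omega⟩
  rfl

lemma prod_Ico_pred (F : ℕ → ℂ) (p q : ℕ) (hp : 1 ≤ p) :
    ∏ j ∈ Finset.Ico p q, F j = ∏ j ∈ Finset.Ico (p - 1) (q - 1), F (j + 1) := by
  obtain ⟨p', rfl⟩ : ∃ p', p = p' + 1 := ⟨p - 1, by omega⟩
  rcases q with _ | q'
  · simp
  · simp only [Nat.add_sub_cancel, Nat.succ_sub_one]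
    exact (Finset.prod_Ico_add' F p' q' 1).symm

lemma prod_blocks (b : ℕ → ℕ) (f : ℕ → ℝ) (k : ℕ) :
    (∏ i ∈ Finset.range k, ∏ j ∈ Finset.Ico (∑ t ∈ Finset.range (i + 1), b t)
        (∑ t ∈ Finset.range (i + 2), b t), f j)
    = ∏ j ∈ Finset.Ico (∑ t ∈ Finset.range 1, b t) (∑ t ∈ Finset.range (k + 1), b t), f j := by
  induction k with
  | zero => simp
  | succ k ih =>
    rw [Finset.prod_range_succ, ih, Finset.prod_Ico_consecutive]
    · exact Finset.sum_le_sum_of_subset (Finset.range_subset_range.2 (by omega))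
    · exact Finset.sum_le_sum_of_subset (Finset.range_subset_range.2 (by omega))

lemma sum_ite_shift (b : ℕ → ℕ) (hb0 : 1 ≤ b 0) (i : ℕ) :
    (∑ t ∈ Finset.range i, (if t = 0 then b 0 - 1 else b t))
      = (∑ t ∈ Finset.range i, b t) - 1 := by
  rcases i with _ | i'
  · simp
  · rw [Finset.sum_range_succ' _ i', Finset.sum_range_succ' b i']
    rw [Finset.sum_congr rfl (fun t _ => by simp :
      ∀ t ∈ Finset.range i', (if t + 1 = 0 then b 0 - 1 else b (t + 1)) = b (t + 1))]
    have h00 : (if (0 : ℕ) = 0 then b 0 - 1 else b 0) = b 0 - 1 := by simp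
    rw [h00]
    omega


lemma term_third (s' : ℕ) (a b : ℕ → ℕ) (lam : ℂ) (n : ℕ → ℕ) (hb0 : 1 ≤ b 0) :
    (∏ i ∈ Finset.range (s' + 1),
      ((n (∑ t ∈ Finset.range i, (if t = 0 then b 0 - 1 else b t)) : ℂ) ^ a i)⁻¹ *
        ∏ j ∈ Finset.Ico (∑ t ∈ Finset.range i, (if t = 0 then b 0 - 1 else b t))
            (∑ t ∈ Finset.range (i + 1), (if t = 0 then b 0 - 1 else b t)),
          ((n j : ℂ) - lam)⁻¹)
    = ((n 0 : ℂ) ^ a 0)⁻¹ * gfun s' a b lam n := by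
  have hsum := sum_ite_shift b hb0
  simp only [hsum]
  rw [Finset.prod_range_succ']
  have hS1 : ∀ i : ℕ, 1 ≤ ∑ t ∈ Finset.range (i + 1), b t := by
    intro i
    calc 1 ≤ b 0 := hb0
      _ ≤ ∑ t ∈ Finset.range (i + 1), b t :=
        Finset.single_le_sum (fun t _ => Nat.zero_le _) (Finset.mem_range.2 (by omega))
  have hstep : ∀ i ∈ Finset.range s',
      ((n ((∑ t ∈ Finset.range (i + 1), b t) - 1) : ℂ) ^ a (i + 1))⁻¹ *
        ∏ j ∈ Finset.Ico ((∑ t ∈ Finset.range (i + 1), b t) - 1)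
            ((∑ t ∈ Finset.range (i + 1 + 1), b t) - 1),
          ((n j : ℂ) - lam)⁻¹
      = blockP a b lam (cons 0 n) (i + 1) := by
    intro i _
    simp only [blockP]
    congr 1
    · have hre : (∑ t ∈ Finset.range (i + 1), b t)
          = ((∑ t ∈ Finset.range (i + 1), b t) - 1) + 1 := by
        have := hS1 i; omega
      conv_rhs => rw [hre]
      rfl
    · conv_rhs => rw [prod_Ico_pred (fun j => ((cons 0 n j : ℂ) - lam)⁻¹)
        (∑ t ∈ Finset.range (i + 1), b t) (∑ t ∈ Finset.range (i + 1 + 1), b t) (hS1 i)]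
      rfl
  rw [Finset.prod_congr rfl hstep]
  have e0 : (∑ t ∈ Finset.range 0, b t) - 1 = 0 := by simp
  have e1 : (∑ t ∈ Finset.range (0 + 1), b t) - 1 = b 0 - 1 := by simp
  rw [e0, e1]
  simp only [gfun, tailG]
  have efirst : (∏ j ∈ Finset.Ico 1 (b 0), ((cons 0 n j : ℂ) - lam)⁻¹)
      = ∏ j ∈ Finset.Ico 0 (b 0 - 1), ((n j : ℂ) - lam)⁻¹ := by
    rw [prod_Ico_pred (fun j => ((cons 0 n j : ℂ) - lam)⁻¹) 1 (b 0) le_rfl]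
    rfl
  rw [efirst]
  ring

lemma exists_B (lam : ℂ) : ∃ B : ℝ, 1 ≤ B ∧
    ∀ k : ℕ, 1 ≤ k → ‖((k : ℂ) - lam)⁻¹‖ ≤ B * ((k : ℝ))⁻¹ := by
  set M : ℕ := 2 * ⌈‖lam‖⌉₊ + 1 with hM
  have hMne : (Finset.Icc 1 M).Nonempty := ⟨1, Finset.mem_Icc.2 ⟨le_rfl, by omega⟩⟩
  set T := (Finset.Icc 1 M).image (fun k : ℕ => ‖((k : ℂ) - lam)⁻¹‖ * k) with hT
  have hTne : T.Nonempty := hMne.image _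
  refine ⟨max 2 (max 1 (T.max' hTne)), le_trans (by norm_num) (le_max_left _ _), ?_⟩
  intro k hk
  have hkpos : (0 : ℝ) < (k : ℝ) := by exact_mod_cast hk
  rw [show max 2 (max 1 (T.max' hTne)) * ((k : ℝ))⁻¹ = max 2 (max 1 (T.max' hTne)) / k from
    (div_eq_mul_inv _ _).symm, le_div_iff₀ hkpos]
  by_cases hkM : k ≤ M
  · have hmem : ‖((k : ℂ) - lam)⁻¹‖ * k ∈ T :=
      Finset.mem_image_of_mem _ (Finset.mem_Icc.2 ⟨hk, hkM⟩)
    calc ‖((k : ℂ) - lam)⁻¹‖ * k ≤ T.max' hTne := Finset.le_max' T _ hmem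
      _ ≤ max 2 (max 1 (T.max' hTne)) := le_trans (le_max_right _ _) (le_max_right _ _)
  · have hlam2 : 2 * ‖lam‖ ≤ (k : ℝ) := by
      have h1 : ‖lam‖ ≤ (⌈‖lam‖⌉₊ : ℝ) := Nat.le_ceil _
      have h2 : (M : ℝ) ≤ (k : ℝ) := by exact_mod_cast le_of_lt (not_le.1 hkM)
      have h4 : (2 * (⌈‖lam‖⌉₊ : ℝ) + 1) = (M : ℝ) := by rw [hM]; push_cast; ring
      nlinarith
    have hnorm : (k : ℝ) / 2 ≤ ‖(k : ℂ) - lam‖ := by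
      have h5 : (k : ℝ) - ‖lam‖ ≤ ‖(k : ℂ) - lam‖ := by
        have := norm_sub_norm_le ((k : ℂ)) lam
        rwa [Complex.norm_natCast] at this
      linarith
    have hpos : (0 : ℝ) < ‖(k : ℂ) - lam‖ := lt_of_lt_of_le (by positivity) hnorm
    have h6 : ‖((k : ℂ) - lam)⁻¹‖ ≤ 2 / k := by
      rw [norm_inv, inv_le_comm₀ hpos (by positivity), inv_div]
      exact hnorm
    calc ‖((k : ℂ) - lam)⁻¹‖ * k ≤ (2 / k) * k := by
          apply mul_le_mul_of_nonneg_right h6 (le_of_lt hkpos)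
      _ = 2 := by field_simp
      _ ≤ max 2 (max 1 (T.max' hTne)) := le_max_left _ _

lemma head_norm_pow (k A : ℕ) (hk : 1 ≤ k) (hA : 1 ≤ A) :
    ‖((k : ℂ) ^ A)⁻¹‖ ≤ 2 * ((k : ℝ))⁻¹ := by
  rw [norm_inv, norm_pow, Complex.norm_natCast]
  have h1 : ((k : ℝ)) ≤ (k : ℝ) ^ A := by
    calc ((k : ℝ)) = (k : ℝ) ^ 1 := (pow_one _).symm
      _ ≤ (k : ℝ) ^ A := pow_le_pow_right₀ (by exact_mod_cast hk) hA
  have h2 : ((k : ℝ) ^ A)⁻¹ ≤ ((k : ℝ))⁻¹ := inv_anti₀ (by exact_mod_cast hk) h1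
  have h3 : (0 : ℝ) ≤ ((k : ℝ))⁻¹ := by positivity
  linarith

lemma head_norm_pow' (k A : ℕ) (hk : 2 ≤ k) (hA : 1 ≤ A) :
    ‖(((k : ℂ) - 1) ^ A)⁻¹‖ ≤ 2 * ((k : ℝ))⁻¹ := by
  have hcast : ((k : ℂ)) - 1 = ((k - 1 : ℕ) : ℂ) := by
    have h1 : (1 : ℕ) ≤ k := by omega
    push_cast [h1]; ring
  rw [hcast, norm_inv, norm_pow, Complex.norm_natCast]
  have hk1 : (1 : ℝ) ≤ ((k - 1 : ℕ) : ℝ) := by exact_mod_cast (by omega : 1 ≤ k - 1)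
  have h1 : ((k - 1 : ℕ) : ℝ) ≤ ((k - 1 : ℕ) : ℝ) ^ A := by
    calc ((k - 1 : ℕ) : ℝ) = ((k - 1 : ℕ) : ℝ) ^ 1 := (pow_one _).symm
      _ ≤ ((k - 1 : ℕ) : ℝ) ^ A := pow_le_pow_right₀ hk1 hA
  have h2 : (((k - 1 : ℕ) : ℝ) ^ A)⁻¹ ≤ ((k - 1 : ℕ) : ℝ)⁻¹ := inv_anti₀ (by linarith) h1
  have h3 : ((k - 1 : ℕ) : ℝ)⁻¹ ≤ 2 * ((k : ℝ))⁻¹ := by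
    rw [show (2 : ℝ) * ((k : ℝ))⁻¹ = ((k : ℝ) / 2)⁻¹ by
      rw [inv_div]; exact (div_eq_mul_inv 2 ((k : ℝ))).symm]
    apply inv_anti₀ (by positivity)
    rw [div_le_iff₀ (by norm_num : (0 : ℝ) < 2)]
    have : (k : ℝ) ≤ 2 * ((k - 1 : ℕ) : ℝ) := by exact_mod_cast (by omega : k ≤ 2 * (k - 1))
    linarith
  linarith

lemma tailG_bound (s' : ℕ) (a b : ℕ → ℕ) (lam : ℂ) (B : ℝ) (hB1 : 1 ≤ B)
    (hB : ∀ k : ℕ, 1 ≤ k → ‖((k : ℂ) - lam)⁻¹‖ ≤ B * ((k : ℝ))⁻¹)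
    (hb : ∀ i, i < s' + 1 → 1 ≤ b i)
    (m : ℕ → ℕ) (hm : ∀ j, 1 ≤ j → j < (∑ t ∈ Finset.range (s' + 1), b t) → 1 ≤ m j) :
    ‖tailG s' a b lam m‖ ≤ B ^ (∑ t ∈ Finset.range (s' + 1), b t) *
      ∏ j ∈ Finset.Ico 1 (∑ t ∈ Finset.range (s' + 1), b t), ((m j : ℝ))⁻¹ := by
  have hb0 : 1 ≤ b 0 := hb 0 (by omega)
  have hSmono : ∀ i k : ℕ, i ≤ k → (∑ t ∈ Finset.range i, b t) ≤ ∑ t ∈ Finset.range k, b t :=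
    fun i k hik => Finset.sum_le_sum_of_subset (Finset.range_subset_range.2 hik)
  have hb0N : b 0 ≤ ∑ t ∈ Finset.range (s' + 1), b t := by
    have := hSmono 1 (s' + 1) (by omega)
    simpa using this
  have hlt : ∀ i, i < s' → (∑ t ∈ Finset.range (i + 1), b t) < ∑ t ∈ Finset.range (s' + 1), b t := by
    intro i hi
    have h1 : (∑ t ∈ Finset.range (i + 2), b t) ≤ ∑ t ∈ Finset.range (s' + 1), b t :=
      hSmono (i + 2) (s' + 1) (by omega)
    have h2 : (∑ t ∈ Finset.range (i + 2), b t) = (∑ t ∈ Finset.range (i + 1), b t) + b (i + 1) :=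
      Finset.sum_range_succ b (i + 1)
    have h3 : 1 ≤ b (i + 1) := hb (i + 1) (by omega)
    omega
  have hS1 : ∀ i : ℕ, 1 ≤ ∑ t ∈ Finset.range (i + 1), b t := by
    intro i
    calc 1 ≤ b 0 := hb0
      _ ≤ ∑ t ∈ Finset.range (i + 1), b t := hSmono 1 (i + 1) (by omega) |>.trans_eq' (by simp)
  -- expand the norm
  rw [tailG, norm_mul, norm_prod]
  have hfirst : (∏ j ∈ Finset.Ico 1 (b 0), ‖((m j : ℂ) - lam)⁻¹‖)
      ≤ ∏ j ∈ Finset.Ico 1 (b 0), (B * ((m j : ℝ))⁻¹) := by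
    apply Finset.prod_le_prod (fun j _ => norm_nonneg _)
    intro j hj
    obtain ⟨hj1, hj2⟩ := Finset.mem_Ico.1 hj
    exact hB (m j) (hm j hj1 (lt_of_lt_of_le hj2 hb0N))
  have hblocks : (‖∏ i ∈ Finset.range s', blockP a b lam m (i + 1)‖)
      ≤ ∏ i ∈ Finset.range s', ∏ j ∈ Finset.Ico (∑ t ∈ Finset.range (i + 1), b t)
          (∑ t ∈ Finset.range (i + 2), b t), (B * ((m j : ℝ))⁻¹) := by
    rw [norm_prod]
    apply Finset.prod_le_prod (fun i _ => norm_nonneg _)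
    intro i hi
    rw [blockP, norm_mul, norm_prod]
    have hhead : ‖((m (∑ t ∈ Finset.range (i + 1), b t) : ℂ) ^ a (i + 1))⁻¹‖ ≤ 1 := by
      rw [norm_inv, norm_pow, Complex.norm_natCast]
      have h1 : (1 : ℝ) ≤ (m (∑ t ∈ Finset.range (i + 1), b t) : ℝ) := by
        exact_mod_cast hm _ (hS1 i) (hlt i (Finset.mem_range.1 hi))
      have h2 : (1 : ℝ) ≤ (m (∑ t ∈ Finset.range (i + 1), b t) : ℝ) ^ a (i + 1) :=
        one_le_pow₀ h1
      exact inv_le_one_of_one_le₀ h2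
    have hinner : (∏ j ∈ Finset.Ico (∑ t ∈ Finset.range (i + 1), b t)
          (∑ t ∈ Finset.range (i + 1 + 1), b t), ‖((m j : ℂ) - lam)⁻¹‖)
        ≤ ∏ j ∈ Finset.Ico (∑ t ∈ Finset.range (i + 1), b t)
          (∑ t ∈ Finset.range (i + 2), b t), (B * ((m j : ℝ))⁻¹) := by
      apply Finset.prod_le_prod (fun j _ => norm_nonneg _)
      intro j hj
      obtain ⟨hj1, hj2⟩ := Finset.mem_Ico.1 hj
      have hj1' : 1 ≤ j := le_trans (hS1 i) hj1
      have hj2' : j < ∑ t ∈ Finset.range (s' + 1), b t :=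
        lt_of_lt_of_le hj2 (hSmono (i + 2) (s' + 1) (by
          have := Finset.mem_range.1 hi; omega))
      exact hB (m j) (hm j hj1' hj2')
    calc ‖((m (∑ t ∈ Finset.range (i + 1), b t) : ℂ) ^ a (i + 1))⁻¹‖ *
          ∏ j ∈ Finset.Ico (∑ t ∈ Finset.range (i + 1), b t)
            (∑ t ∈ Finset.range (i + 1 + 1), b t), ‖((m j : ℂ) - lam)⁻¹‖
        ≤ 1 * ∏ j ∈ Finset.Ico (∑ t ∈ Finset.range (i + 1), b t)
            (∑ t ∈ Finset.range (i + 2), b t), (B * ((m j : ℝ))⁻¹) := by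
          apply mul_le_mul hhead hinner
            (Finset.prod_nonneg fun j _ => norm_nonneg _) (by norm_num)
      _ = ∏ j ∈ Finset.Ico (∑ t ∈ Finset.range (i + 1), b t)
            (∑ t ∈ Finset.range (i + 2), b t), (B * ((m j : ℝ))⁻¹) := one_mul _
  have hcomb : (∏ j ∈ Finset.Ico 1 (b 0), (B * ((m j : ℝ))⁻¹)) *
      (∏ i ∈ Finset.range s', ∏ j ∈ Finset.Ico (∑ t ∈ Finset.range (i + 1), b t)
          (∑ t ∈ Finset.range (i + 2), b t), (B * ((m j : ℝ))⁻¹))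
      = ∏ j ∈ Finset.Ico 1 (∑ t ∈ Finset.range (s' + 1), b t), (B * ((m j : ℝ))⁻¹) := by
    rw [prod_blocks]
    rw [show (∑ t ∈ Finset.range 1, b t) = b 0 by simp]
    exact Finset.prod_Ico_consecutive _ hb0 hb0N
  have hnn1 : (0 : ℝ) ≤ ∏ j ∈ Finset.Ico 1 (b 0), (B * ((m j : ℝ))⁻¹) :=
    Finset.prod_nonneg fun j _ => by positivity
  have hnn2 : (0 : ℝ) ≤ ∏ i ∈ Finset.range s', ∏ j ∈ Finset.Ico (∑ t ∈ Finset.range (i + 1), b t)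
      (∑ t ∈ Finset.range (i + 2), b t), (B * ((m j : ℝ))⁻¹) :=
    Finset.prod_nonneg fun i _ => Finset.prod_nonneg fun j _ => by positivity
  calc (∏ j ∈ Finset.Ico 1 (b 0), ‖((m j : ℂ) - lam)⁻¹‖) *
        ‖∏ i ∈ Finset.range s', blockP a b lam m (i + 1)‖
      ≤ (∏ j ∈ Finset.Ico 1 (b 0), (B * ((m j : ℝ))⁻¹)) *
        (∏ i ∈ Finset.range s', ∏ j ∈ Finset.Ico (∑ t ∈ Finset.range (i + 1), b t)
          (∑ t ∈ Finset.range (i + 2), b t), (B * ((m j : ℝ))⁻¹)) :=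
        mul_le_mul hfirst hblocks (norm_nonneg _)
          hnn1
    _ = ∏ j ∈ Finset.Ico 1 (∑ t ∈ Finset.range (s' + 1), b t), (B * ((m j : ℝ))⁻¹) := hcomb
    _ = B ^ (Finset.Ico 1 (∑ t ∈ Finset.range (s' + 1), b t)).card *
          ∏ j ∈ Finset.Ico 1 (∑ t ∈ Finset.range (s' + 1), b t), ((m j : ℝ))⁻¹ := by
        rw [Finset.prod_mul_distrib, Finset.prod_const]
    _ ≤ B ^ (∑ t ∈ Finset.range (s' + 1), b t) *
          ∏ j ∈ Finset.Ico 1 (∑ t ∈ Finset.range (s' + 1), b t), ((m j : ℝ))⁻¹ := by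
        apply mul_le_mul_of_nonneg_right _ (Finset.prod_nonneg fun j _ => by positivity)
        apply pow_le_pow_right₀ hB1
        rw [Nat.card_Ico]
        omega

lemma algebra_id (lam x G : ℂ) (hx0 : x ≠ 0) (hx1 : x - 1 ≠ 0) (hxl : x - lam ≠ 0)
    (A : ℕ) (hA : 2 ≤ A) :
    lam * ((x ^ A)⁻¹ * ((x - lam)⁻¹ * G)) - (x ^ (A - 1))⁻¹ * ((x - lam)⁻¹ * G)
      - ((lam - 1) * (((x - 1) ^ A)⁻¹ * ((x - lam)⁻¹ * G))
          - ((x - 1) ^ (A - 1))⁻¹ * ((x - lam)⁻¹ * G))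
    = (((x - 1) ^ A)⁻¹ - (x ^ A)⁻¹) * G := by
  obtain ⟨A', rfl⟩ : ∃ A', A = A' + 2 := ⟨A - 2, by omega⟩
  have h1 : A' + 2 - 1 = A' + 1 := by omega
  rw [h1]
  have key1 : lam * (x ^ (A' + 2))⁻¹ - (x ^ (A' + 1))⁻¹ = -((x ^ (A' + 2))⁻¹ * (x - lam)) := by
    have hp : x ^ (A' + 2) = x ^ (A' + 1) * x := pow_succ x (A' + 1)
    have h2 : x ^ (A' + 1) ≠ 0 := pow_ne_zero _ hx0
    field_simp [hp]
    ring
  have key2 : (lam - 1) * ((x - 1) ^ (A' + 2))⁻¹ - ((x - 1) ^ (A' + 1))⁻¹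
      = -(((x - 1) ^ (A' + 2))⁻¹ * (x - lam)) := by
    have hp : (x - 1) ^ (A' + 2) = (x - 1) ^ (A' + 1) * (x - 1) := pow_succ (x - 1) (A' + 1)
    have h2 : (x - 1) ^ (A' + 1) ≠ 0 := pow_ne_zero _ hx1
    field_simp [hp]
    ring
  have hxl' : (x - lam) * (x - lam)⁻¹ = 1 := mul_inv_cancel₀ hxl
  linear_combination ((x - lam)⁻¹ * G) * key1 - ((x - lam)⁻¹ * G) * key2
    + ((((x - 1) ^ (A' + 2))⁻¹ - (x ^ (A' + 2))⁻¹) * G) * hxl'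


lemma summable_split (s' N'' : ℕ) (a b : ℕ → ℕ) (lam : ℂ) (B : ℝ) (hB1 : 1 ≤ B)
    (hB : ∀ k : ℕ, 1 ≤ k → ‖((k : ℂ) - lam)⁻¹‖ ≤ B * ((k : ℝ))⁻¹)
    (hb : ∀ i, i < s' + 1 → 1 ≤ b i)
    (hN : (∑ t ∈ Finset.range (s' + 1), b t) = N'' + 2)
    (headf : ℕ → ℂ) (hhead : ∀ k, 2 ≤ k → ‖headf k‖ ≤ 2 * ((k : ℝ))⁻¹) :
    Summable (fun m : DecTuple (N'' + 2) =>
      headf (m.1 0) * (((m.1 0 : ℂ) - lam)⁻¹ * tailG s' a b lam m.1)) := by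
  refine masterSummable (N := N'' + 1)
    (fun x => headf (x 0) * (((x 0 : ℂ) - lam)⁻¹ * tailG s' a b lam x))
    (2 * B * B ^ (N'' + 2)) ?_
  intro m
  have h01 : m.1 1 < m.1 0 := m.2.1 0 (by omega)
  have h11 := m.2.2.1 1 (by omega)
  have hm0 : 2 ≤ m.1 0 := by omega
  have hmj : ∀ j, 1 ≤ j → j < (∑ t ∈ Finset.range (s' + 1), b t) → 1 ≤ m.1 j := by
    intro j _ hj
    rw [hN] at hj
    exact m.2.2.1 j (by omega)
  have htb := tailG_bound s' a b lam B hB1 hB hb m.1 hmj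
  rw [hN] at htb
  rw [norm_mul, norm_mul]
  have h1 : ‖headf (m.1 0)‖ ≤ 2 * ((m.1 0 : ℝ))⁻¹ := hhead _ hm0
  have h2 : ‖((m.1 0 : ℂ) - lam)⁻¹‖ ≤ B * ((m.1 0 : ℝ))⁻¹ := hB _ (by omega)
  have hPnn : (0 : ℝ) ≤ ∏ j ∈ Finset.Ico 1 (N'' + 2), ((m.1 j : ℝ))⁻¹ :=
    Finset.prod_nonneg fun j _ => by positivity
  have hm0pos : (0 : ℝ) < (m.1 0 : ℝ) := by exact_mod_cast (by omega : 0 < m.1 0)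
  calc ‖headf (m.1 0)‖ * (‖((m.1 0 : ℂ) - lam)⁻¹‖ * ‖tailG s' a b lam m.1‖)
      ≤ (2 * ((m.1 0 : ℝ))⁻¹) * ((B * ((m.1 0 : ℝ))⁻¹) *
          (B ^ (N'' + 2) * ∏ j ∈ Finset.Ico 1 (N'' + 2), ((m.1 j : ℝ))⁻¹)) := by
        apply mul_le_mul h1 _ (by positivity) (by positivity)
        apply mul_le_mul h2 htb (norm_nonneg _) (by positivity)
    _ = (2 * B * B ^ (N'' + 2)) * wt (N'' + 2) m.1 := by
        rw [wt, pow_two, mul_inv]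
        ring

end BFB

/-- **Lemma (i)(a):** if `a₁ ≥ 2` and `b₁ ≥ 2`, with `λ' = λ - 1`, then
`λ·[{(a₁,0),b₁,…};λ] - [{(a₁-1,0),b₁,…};λ] - [{(a₁,0),b₁-1,…};λ]
  = λ'·[{(a₁,1),b₁,…};λ] - [{(a₁-1,1),b₁,…};λ]`,
where only the first block is modified and all brackets are evaluated at `λ`. -/
theorem bracket_first_block (s : ℕ) (hs : 1 ≤ s) (a b : ℕ → ℕ)
    (ha : ∀ i, i < s → 1 ≤ a i) (hb : ∀ i, i < s → 1 ≤ b i)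
    (ha1 : 2 ≤ a 0) (hb1 : 2 ≤ b 0)
    (lam : ℂ) (hlam : ∀ p : ℕ, 0 < p → lam ≠ (p : ℂ)) :
    lam * bracket s a b (fun _ => 0) lam
      - bracket s (fun i => if i = 0 then a 0 - 1 else a i) b (fun _ => 0) lam
      - bracket s a (fun i => if i = 0 then b 0 - 1 else b i) (fun _ => 0) lam
    = (lam - 1) * bracket s a b (fun i => if i = 0 then 1 else 0) lam
      - bracket s (fun i => if i = 0 then a 0 - 1 else a i) b
          (fun i => if i = 0 then 1 else 0) lam := by
  obtain ⟨s', rfl⟩ : ∃ s', s = s' + 1 := ⟨s - 1, by omega⟩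
  obtain ⟨B, hB1, hB⟩ := BFB.exists_B lam
  obtain ⟨N'', hN⟩ : ∃ N'', (∑ t ∈ Finset.range (s' + 1), b t) = N'' + 2 := by
    have hble : b 0 ≤ ∑ t ∈ Finset.range (s' + 1), b t :=
      Finset.single_le_sum (fun t _ => Nat.zero_le (b t)) (Finset.mem_range.2 (by omega))
    exact ⟨(∑ t ∈ Finset.range (s' + 1), b t) - 2, by omega⟩
  have hb0 : 1 ≤ b 0 := by omega
  have ha01 : 1 ≤ a 0 := by omega
  -- ==== conversions of the five brackets ====
  have eA : bracket (s' + 1) a b (fun _ => 0) lam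
      = ∑' m : DecTuple (N'' + 2), ((m.1 0 : ℂ) ^ a 0)⁻¹ *
          (((m.1 0 : ℂ) - lam)⁻¹ * BFB.tailG s' a b lam m.1) := by
    have e0 : bracket (s' + 1) a b (fun _ => 0) lam
        = ∑' m : DecTuple (∑ t ∈ Finset.range (s' + 1), b t),
            ∏ i ∈ Finset.range (s' + 1),
              (((m.1 (∑ t ∈ Finset.range i, b t) : ℂ) - ((0 : ℕ) : ℂ)) ^ a i)⁻¹ *
                ∏ j ∈ Finset.Ico (∑ t ∈ Finset.range i, b t) (∑ t ∈ Finset.range (i + 1), b t),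
                  ((m.1 j : ℂ) - lam)⁻¹ := rfl
    rw [e0, hN]
    apply tsum_congr
    intro m
    rw [BFB.term_split s' a b lam m.1 (by omega) a (fun _ => 0)
      (fun _ _ => rfl) (fun _ _ => rfl)]
    simp
  have eB : bracket (s' + 1) (fun i => if i = 0 then a 0 - 1 else a i) b (fun _ => 0) lam
      = ∑' m : DecTuple (N'' + 2), ((m.1 0 : ℂ) ^ (a 0 - 1))⁻¹ *
          (((m.1 0 : ℂ) - lam)⁻¹ * BFB.tailG s' a b lam m.1) := by
    have e0 : bracket (s' + 1) (fun i => if i = 0 then a 0 - 1 else a i) b (fun _ => 0) lam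
        = ∑' m : DecTuple (∑ t ∈ Finset.range (s' + 1), b t),
            ∏ i ∈ Finset.range (s' + 1),
              (((m.1 (∑ t ∈ Finset.range i, b t) : ℂ) - ((0 : ℕ) : ℂ)) ^
                  (if i = 0 then a 0 - 1 else a i))⁻¹ *
                ∏ j ∈ Finset.Ico (∑ t ∈ Finset.range i, b t) (∑ t ∈ Finset.range (i + 1), b t),
                  ((m.1 j : ℂ) - lam)⁻¹ := rfl
    rw [e0, hN]
    apply tsum_congr
    intro m
    rw [BFB.term_split s' a b lam m.1 (by omega) (fun i => if i = 0 then a 0 - 1 else a i)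
      (fun _ => 0) (fun i hi => if_neg (by omega)) (fun _ _ => rfl)]
    simp
  have eC : bracket (s' + 1) a b (fun i => if i = 0 then 1 else 0) lam
      = ∑' m : DecTuple (N'' + 2), (((m.1 0 : ℂ) - 1) ^ a 0)⁻¹ *
          (((m.1 0 : ℂ) - lam)⁻¹ * BFB.tailG s' a b lam m.1) := by
    have e0 : bracket (s' + 1) a b (fun i => if i = 0 then 1 else 0) lam
        = ∑' m : DecTuple (∑ t ∈ Finset.range (s' + 1), b t),
            ∏ i ∈ Finset.range (s' + 1),
              (((m.1 (∑ t ∈ Finset.range i, b t) : ℂ) -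
                  (((if i = 0 then 1 else 0) : ℕ) : ℂ)) ^ a i)⁻¹ *
                ∏ j ∈ Finset.Ico (∑ t ∈ Finset.range i, b t) (∑ t ∈ Finset.range (i + 1), b t),
                  ((m.1 j : ℂ) - lam)⁻¹ := rfl
    rw [e0, hN]
    apply tsum_congr
    intro m
    rw [BFB.term_split s' a b lam m.1 (by omega) a (fun i => if i = 0 then 1 else 0)
      (fun _ _ => rfl) (fun i hi => if_neg (by omega))]
    simp
  have eD : bracket (s' + 1) (fun i => if i = 0 then a 0 - 1 else a i) b
        (fun i => if i = 0 then 1 else 0) lam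
      = ∑' m : DecTuple (N'' + 2), (((m.1 0 : ℂ) - 1) ^ (a 0 - 1))⁻¹ *
          (((m.1 0 : ℂ) - lam)⁻¹ * BFB.tailG s' a b lam m.1) := by
    have e0 : bracket (s' + 1) (fun i => if i = 0 then a 0 - 1 else a i) b
          (fun i => if i = 0 then 1 else 0) lam
        = ∑' m : DecTuple (∑ t ∈ Finset.range (s' + 1), b t),
            ∏ i ∈ Finset.range (s' + 1),
              (((m.1 (∑ t ∈ Finset.range i, b t) : ℂ) -
                  (((if i = 0 then 1 else 0) : ℕ) : ℂ)) ^
                  (if i = 0 then a 0 - 1 else a i))⁻¹ *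
                ∏ j ∈ Finset.Ico (∑ t ∈ Finset.range i, b t) (∑ t ∈ Finset.range (i + 1), b t),
                  ((m.1 j : ℂ) - lam)⁻¹ := rfl
    rw [e0, hN]
    apply tsum_congr
    intro m
    rw [BFB.term_split s' a b lam m.1 (by omega) (fun i => if i = 0 then a 0 - 1 else a i)
      (fun i => if i = 0 then 1 else 0) (fun i hi => if_neg (by omega))
      (fun i hi => if_neg (by omega))]
    simp
  have eT : bracket (s' + 1) a (fun i => if i = 0 then b 0 - 1 else b i) (fun _ => 0) lam
      = ∑' n : DecTuple (N'' + 1), ((n.1 0 : ℂ) ^ a 0)⁻¹ * BFB.gfun s' a b lam n.1 := by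
    have e0 : bracket (s' + 1) a (fun i => if i = 0 then b 0 - 1 else b i) (fun _ => 0) lam
        = ∑' n : DecTuple (∑ t ∈ Finset.range (s' + 1), (if t = 0 then b 0 - 1 else b t)),
            ∏ i ∈ Finset.range (s' + 1),
              (((n.1 (∑ t ∈ Finset.range i, (if t = 0 then b 0 - 1 else b t)) : ℂ) -
                  ((0 : ℕ) : ℂ)) ^ a i)⁻¹ *
                ∏ j ∈ Finset.Ico (∑ t ∈ Finset.range i, (if t = 0 then b 0 - 1 else b t))
                    (∑ t ∈ Finset.range (i + 1), (if t = 0 then b 0 - 1 else b t)),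
                  ((n.1 j : ℂ) - lam)⁻¹ := rfl
    have hNT : (∑ t ∈ Finset.range (s' + 1), (if t = 0 then b 0 - 1 else b t)) = N'' + 1 := by
      rw [BFB.sum_ite_shift b hb0]
      omega
    rw [e0, hNT]
    apply tsum_congr
    intro n
    have hterm := BFB.term_third s' a b lam n.1 hb0
    rw [← hterm]
    apply Finset.prod_congr rfl
    intro i _
    simp
  rw [eA, eB, eC, eD, eT]
  -- ==== summability ====
  have SA := BFB.summable_split s' N'' a b lam B hB1 hB hb hN
    (fun k => ((k : ℂ) ^ a 0)⁻¹)
    (fun k hk => BFB.head_norm_pow k (a 0) (by omega) ha01)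
  have SB := BFB.summable_split s' N'' a b lam B hB1 hB hb hN
    (fun k => ((k : ℂ) ^ (a 0 - 1))⁻¹)
    (fun k hk => BFB.head_norm_pow k (a 0 - 1) (by omega) (by omega))
  have SC := BFB.summable_split s' N'' a b lam B hB1 hB hb hN
    (fun k => (((k : ℂ) - 1) ^ a 0)⁻¹)
    (fun k hk => BFB.head_norm_pow' k (a 0) hk ha01)
  have SD := BFB.summable_split s' N'' a b lam B hB1 hB hb hN
    (fun k => (((k : ℂ) - 1) ^ (a 0 - 1))⁻¹)
    (fun k hk => BFB.head_norm_pow' k (a 0 - 1) hk (by omega))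
  -- ==== combine tsums ====
  have hAB : lam * (∑' m : DecTuple (N'' + 2), ((m.1 0 : ℂ) ^ a 0)⁻¹ *
        (((m.1 0 : ℂ) - lam)⁻¹ * BFB.tailG s' a b lam m.1))
      - (∑' m : DecTuple (N'' + 2), ((m.1 0 : ℂ) ^ (a 0 - 1))⁻¹ *
        (((m.1 0 : ℂ) - lam)⁻¹ * BFB.tailG s' a b lam m.1))
      = ∑' m : DecTuple (N'' + 2),
          (lam * (((m.1 0 : ℂ) ^ a 0)⁻¹ * (((m.1 0 : ℂ) - lam)⁻¹ * BFB.tailG s' a b lam m.1))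
            - ((m.1 0 : ℂ) ^ (a 0 - 1))⁻¹ *
              (((m.1 0 : ℂ) - lam)⁻¹ * BFB.tailG s' a b lam m.1)) := by
    rw [← tsum_mul_left]
    exact (Summable.tsum_sub (SA.mul_left lam) SB).symm
  have hCD : (lam - 1) * (∑' m : DecTuple (N'' + 2), (((m.1 0 : ℂ) - 1) ^ a 0)⁻¹ *
        (((m.1 0 : ℂ) - lam)⁻¹ * BFB.tailG s' a b lam m.1))
      - (∑' m : DecTuple (N'' + 2), (((m.1 0 : ℂ) - 1) ^ (a 0 - 1))⁻¹ *
        (((m.1 0 : ℂ) - lam)⁻¹ * BFB.tailG s' a b lam m.1))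
      = ∑' m : DecTuple (N'' + 2),
          ((lam - 1) * ((((m.1 0 : ℂ) - 1) ^ a 0)⁻¹ *
              (((m.1 0 : ℂ) - lam)⁻¹ * BFB.tailG s' a b lam m.1))
            - (((m.1 0 : ℂ) - 1) ^ (a 0 - 1))⁻¹ *
              (((m.1 0 : ℂ) - lam)⁻¹ * BFB.tailG s' a b lam m.1)) := by
    rw [← tsum_mul_left]
    exact (Summable.tsum_sub (SC.mul_left (lam - 1)) SD).symm
  rw [hAB, hCD]
  -- ==== the key identity ====
  have hg : ∀ n : DecTuple (N'' + 1), ‖BFB.gfun s' a b lam n.1‖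
      ≤ B ^ (N'' + 2) * ∏ j ∈ Finset.range (N'' + 1), ((n.1 j : ℝ))⁻¹ := by
    intro n
    have hm : ∀ j, 1 ≤ j → j < (∑ t ∈ Finset.range (s' + 1), b t) →
        1 ≤ (BFB.cons 0 n.1) j := by
      intro j hj1 hj2
      obtain ⟨j', rfl⟩ : ∃ j', j = j' + 1 := ⟨j - 1, by omega⟩
      rw [hN] at hj2
      exact n.2.2.1 j' (by omega)
    have htb := BFB.tailG_bound s' a b lam B hB1 hB hb (BFB.cons 0 n.1) hm
    rw [hN] at htb
    calc ‖BFB.gfun s' a b lam n.1‖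
        = ‖BFB.tailG s' a b lam (BFB.cons 0 n.1)‖ := rfl
      _ ≤ B ^ (N'' + 2) * ∏ j ∈ Finset.Ico 1 (N'' + 2), (((BFB.cons 0 n.1) j : ℝ))⁻¹ := htb
      _ = B ^ (N'' + 2) * ∏ j ∈ Finset.range (N'' + 1), ((n.1 j : ℝ))⁻¹ := by
          congr 1
          rw [BFB.prod_Ico_one (fun j => (((BFB.cons 0 n.1) j : ℕ) : ℝ)⁻¹) (N'' + 1)]
          exact Finset.prod_congr rfl fun j _ => rfl
  have key : (∑' m : DecTuple (N'' + 2),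
        (lam * (((m.1 0 : ℂ) ^ a 0)⁻¹ * (((m.1 0 : ℂ) - lam)⁻¹ * BFB.tailG s' a b lam m.1))
          - ((m.1 0 : ℂ) ^ (a 0 - 1))⁻¹ * (((m.1 0 : ℂ) - lam)⁻¹ * BFB.tailG s' a b lam m.1)))
      - (∑' m : DecTuple (N'' + 2),
        ((lam - 1) * ((((m.1 0 : ℂ) - 1) ^ a 0)⁻¹ *
            (((m.1 0 : ℂ) - lam)⁻¹ * BFB.tailG s' a b lam m.1))
          - (((m.1 0 : ℂ) - 1) ^ (a 0 - 1))⁻¹ *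
            (((m.1 0 : ℂ) - lam)⁻¹ * BFB.tailG s' a b lam m.1)))
      = ∑' n : DecTuple (N'' + 1), ((n.1 0 : ℂ) ^ a 0)⁻¹ * BFB.gfun s' a b lam n.1 := by
    rw [← Summable.tsum_sub ((SA.mul_left lam).sub SB) ((SC.mul_left (lam - 1)).sub SD)]
    have hstep : (∑' m : DecTuple (N'' + 2),
          ((lam * (((m.1 0 : ℂ) ^ a 0)⁻¹ * (((m.1 0 : ℂ) - lam)⁻¹ * BFB.tailG s' a b lam m.1))
            - ((m.1 0 : ℂ) ^ (a 0 - 1))⁻¹ * (((m.1 0 : ℂ) - lam)⁻¹ * BFB.tailG s' a b lam m.1))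
          - ((lam - 1) * ((((m.1 0 : ℂ) - 1) ^ a 0)⁻¹ *
              (((m.1 0 : ℂ) - lam)⁻¹ * BFB.tailG s' a b lam m.1))
            - (((m.1 0 : ℂ) - 1) ^ (a 0 - 1))⁻¹ *
              (((m.1 0 : ℂ) - lam)⁻¹ * BFB.tailG s' a b lam m.1))))
        = ∑' m : DecTuple (N'' + 2),
            ((((m.1 0 : ℂ) - 1) ^ a 0)⁻¹ - ((m.1 0 : ℂ) ^ a 0)⁻¹) *
              BFB.gfun s' a b lam (fun j => m.1 (j + 1)) := by
      apply tsum_congr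
      intro m
      have h01 : m.1 1 < m.1 0 := m.2.1 0 (by omega)
      have h11 := m.2.2.1 1 (by omega)
      have hm0 : 2 ≤ m.1 0 := by omega
      have hx0 : (m.1 0 : ℂ) ≠ 0 := Nat.cast_ne_zero.2 (by omega)
      have hx1 : (m.1 0 : ℂ) - 1 ≠ 0 := by
        have h : ((m.1 0 : ℕ) : ℂ) ≠ ((1 : ℕ) : ℂ) := by
          exact_mod_cast (by omega : m.1 0 ≠ 1)
        rw [sub_ne_zero]
        simpa using h
      have hxl : (m.1 0 : ℂ) - lam ≠ 0 :=
        sub_ne_zero_of_ne (Ne.symm (hlam (m.1 0) (by omega)))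
      rw [BFB.gfun_tail s' a b lam hb0 m.1]
      exact BFB.algebra_id lam ((m.1 0 : ℂ)) (BFB.tailG s' a b lam m.1) hx0 hx1 hxl (a 0) ha1
    rw [hstep]
    exact BFB.core N'' (a 0) ha1 (BFB.gfun s' a b lam) (B ^ (N'' + 2)) hg
  linear_combination key
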